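/- arXiv:1106.2326 — 6 statements merged into one kernel-verified Lean document; each statement's English description precedes it below -/
import Mathlib

section
/- For the Kramers–Fokker–Planck quadratic symbol q(x,v,ξ,η) = η² + v²/4 + i(vξ - a x η) with a ∈ ℝ, a ≠ 0, the Hamilton map F satisfies: λ ∈ ℂ is an eigenvalue of 2F if and only if (λ - a/λ)² + 1 = 0 (with λ ≠ 0). -/
open Complex

/-- The Hamilton map of the Kramers–Fokker–Planck quadratic symbol
`q(x,v,ξ,η) = η² + v²/4 + i(vξ - a x η)`. -/
noncomputable def KFPHamiltonMap (a : ℝ) : Matrix (Fin 4) (Fin 4) ℂ :=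
  !![0, I / 2, 0, 0;
     -(a : ℂ) * I / 2, 0, 0, 1;
     0, 0, 0, (a : ℂ) * I / 2;
     0, -1 / 4, -I / 2, 0]

/-- For the Kramers–Fokker–Planck Hamilton map `F`, a nonzero `λ ∈ ℂ` is an eigenvalue
of `2F` if and only if `(λ - a/λ)² + 1 = 0`. -/
theorem KFP_eigenvalue_characterization (a : ℝ) (ha : a ≠ 0) (l : ℂ) (hl : l ≠ 0) :
    (∃ v : Fin 4 → ℂ, v ≠ 0 ∧ ((2 : ℂ) • KFPHamiltonMap a).mulVec v = l • v) ↔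
      (l - (a : ℂ) / l) ^ 2 + 1 = 0 := by
  set M : Matrix (Fin 4) (Fin 4) ℂ := (2 : ℂ) • KFPHamiltonMap a - l • 1 with hM
  have step1 : (∃ v : Fin 4 → ℂ, v ≠ 0 ∧ ((2 : ℂ) • KFPHamiltonMap a).mulVec v = l • v) ↔
      (∃ v : Fin 4 → ℂ, v ≠ 0 ∧ M.mulVec v = 0) := by
    apply exists_congr; intro v
    simp [hM, Matrix.sub_mulVec, Matrix.smul_mulVec, Matrix.one_mulVec, sub_eq_zero]
  have step2 : (∃ v : Fin 4 → ℂ, v ≠ 0 ∧ M.mulVec v = 0) ↔ M.det = 0 := by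
    simpa using M.exists_mulVec_eq_zero_iff
  have hdet : M.det = l ^ 4 + (1 - 2 * (a : ℂ)) * l ^ 2 + (a : ℂ) ^ 2 := by
    have : M = !![-l, I, 0, 0;
        -(a : ℂ) * I, -l, 0, 2;
        0, 0, -l, (a : ℂ) * I;
        0, -1/2, -I, -l] := by
      rw [hM, KFPHamiltonMap]
      ext i j
      fin_cases i <;> fin_cases j <;>
        simp [Matrix.smul_apply, Matrix.one_apply] <;> ring
    rw [this]
    simp [Matrix.det_succ_row_zero, Fin.sum_univ_succ, Fin.succAbove]
    ring_nf
    simp [Complex.I_sq]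
    ring
  rw [step1, step2, hdet]
  have hfac : l ^ 4 + (1 - 2 * (a : ℂ)) * l ^ 2 + (a : ℂ) ^ 2
      = l ^ 2 * ((l - (a : ℂ) / l) ^ 2 + 1) := by
    field_simp
    ring
  rw [hfac, mul_eq_zero]
  simp [pow_eq_zero_iff, hl]
end

section
/- For the 4×4 complex matrix F with rows (0, i/2, 0, 0), (-ai/2, 0, 0, 1), (0, 0, 0, ai/2), (0, -1/4, -i/2, 0) and a < 0, the eigenvalues λ of 2F with Im λ > 0 are exactly λ₁ = (-i + i√(1-4a))/2 and λ₂ = (i + i√(1-4a))/2. -/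
open Complex

/-- For `a < 0`, the eigenvalues `λ` of `2F` with `Im λ > 0` are exactly
`λ₁ = (-i + i√(1-4a))/2` and `λ₂ = (i + i√(1-4a))/2`. -/
theorem KFP_eigenvalues_im_pos (a : ℝ) (ha : a < 0) :
    {l : ℂ | (∃ v : Fin 4 → ℂ, v ≠ 0 ∧ ((2 : ℂ) • KFPHamiltonMap a).mulVec v = l • v) ∧
        0 < l.im} =
      {(-I + I * (Real.sqrt (1 - 4 * a) : ℂ)) / 2,
       (I + I * (Real.sqrt (1 - 4 * a) : ℂ)) / 2} := by
  set s : ℝ := Real.sqrt (1 - 4 * a) with hs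
  have hs1 : 1 < s := by
    rw [hs]
    nlinarith [Real.sq_sqrt (by nlinarith : (0:ℝ) ≤ 1 - 4 * a),
      Real.sqrt_nonneg (1 - 4 * a)]
  have hsq : (s : ℂ)^2 = 1 - 4 * a := by
    rw [← Complex.ofReal_pow, Real.sq_sqrt (by nlinarith : (0:ℝ) ≤ 1 - 4 * a)]
    push_cast; ring
  ext l
  simp only [Set.mem_setOf_eq, Set.mem_insert_iff, Set.mem_singleton_iff]
  -- step 1: eigenvalue iff det = 0
  have hdet : ∀ l : ℂ, (∃ v : Fin 4 → ℂ, v ≠ 0 ∧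
      ((2 : ℂ) • KFPHamiltonMap a).mulVec v = l • v) ↔
      ((2 : ℂ) • KFPHamiltonMap a - l • 1).det = 0 := by
    intro l
    rw [← Matrix.exists_mulVec_eq_zero_iff]
    constructor
    · rintro ⟨v, hv, h⟩
      exact ⟨v, hv, by rw [Matrix.sub_mulVec, h, Matrix.smul_mulVec,
        Matrix.one_mulVec, sub_self]⟩
    · rintro ⟨v, hv, h⟩
      refine ⟨v, hv, ?_⟩
      have h1 : (l • (1 : Matrix (Fin 4) (Fin 4) ℂ)).mulVec v = l • v := by
        rw [Matrix.smul_mulVec, Matrix.one_mulVec]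
      rw [Matrix.sub_mulVec, h1, sub_eq_zero] at h
      exact h
  -- step 2: factor determinant
  have hfac : ((2 : ℂ) • KFPHamiltonMap a - l • 1).det =
      (l - (-I + I * s)/2) * (l + (-I + I * s)/2) *
      ((l - (I + I * s)/2) * (l + (I + I * s)/2)) := by
    have hP : ((2 : ℂ) • KFPHamiltonMap a - l • 1).det
        = l^4 + (1 - 2*a)*l^2 + a^2 := by
      simp [Matrix.det_succ_row_zero, Fin.sum_univ_succ, KFPHamiltonMap, Matrix.one_apply,
        Fin.succAbove]
      ring_nf
      simp [Complex.I_sq, pow_succ]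
      ring
    rw [hP]
    have hI4 : I^4 = 1 := by rw [show (4:ℕ) = 2*2 from rfl, pow_mul, Complex.I_sq]; norm_num
    ring_nf
    simp only [Complex.I_sq, hI4]
    linear_combination (-(s:ℂ)^2/16 - l^2/2 + 1/16 + (a:ℂ)/4) * hsq
  rw [hdet, hfac]
  have hroots : (l - (-I + I * s)/2) * (l + (-I + I * s)/2) *
      ((l - (I + I * s)/2) * (l + (I + I * s)/2)) = 0 ↔
      l = (-I + I * s)/2 ∨ l = -((-I + I * s)/2) ∨
      l = (I + I * s)/2 ∨ l = -((I + I * s)/2) := by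
    simp [mul_eq_zero, sub_eq_zero, add_eq_zero_iff_eq_neg, or_assoc]
  rw [hroots]
  have im1 : ((-I + I * (s:ℂ))/2).im = (s - 1)/2 := by simp; ring
  have im2 : ((I + I * (s:ℂ))/2).im = (s + 1)/2 := by simp; ring
  constructor
  · rintro ⟨h, him⟩
    rcases h with h | h | h | h
    · exact Or.inl h
    · exfalso; rw [h, Complex.neg_im, im1] at him; linarith
    · exact Or.inr h
    · exfalso; rw [h, Complex.neg_im, im2] at him; linarith
  · rintro (h | h)
    · exact ⟨Or.inl h, by rw [h, im1]; linarith⟩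
    · exact ⟨Or.inr (Or.inr (Or.inl h)), by rw [h, im2]; linarith⟩
end

section
/- The spectral gap τ₀ = 2 min{Im λ : λ ∈ σ(F), Im λ > 0} for the Kramers–Fokker–Planck Hamilton map equals (√(1-4a) - 1)/2 when a < 0, equals (1 - √(1-4a))/2 when 0 < a ≤ 1/4, and equals 1/2 when a > 1/4. -/
open Complex

lemma KFP_det (a : ℝ) (l : ℂ) :
    (KFPHamiltonMap a - l • 1).det =
      (16 * l ^ 4 + (4 - 8 * (a : ℂ)) * l ^ 2 + (a : ℂ) ^ 2) / 16 := by
  have hM : KFPHamiltonMap a - l • 1 =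
      !![-l, I / 2, 0, 0;
         -(a : ℂ) * I / 2, -l, 0, 1;
         0, 0, -l, (a : ℂ) * I / 2;
         0, -1 / 4, -I / 2, -l] := by
    unfold KFPHamiltonMap
    ext i j
    fin_cases i <;> fin_cases j <;>
      simp [Matrix.one_apply, Matrix.smul_apply]
  rw [hM]
  simp [Matrix.det_succ_row_zero, Fin.sum_univ_succ, Fin.succAbove]
  ring_nf
  simp [Complex.I_sq]
  ring

lemma KFP_eig_iff (a : ℝ) (l : ℂ) :
    (∃ v : Fin 4 → ℂ, v ≠ 0 ∧ (KFPHamiltonMap a).mulVec v = l • v) ↔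
    16 * l ^ 4 + (4 - 8 * (a : ℂ)) * l ^ 2 + (a : ℂ) ^ 2 = 0 := by
  have h1 : (∃ v : Fin 4 → ℂ, v ≠ 0 ∧ (KFPHamiltonMap a).mulVec v = l • v) ↔
      (∃ v, v ≠ 0 ∧ (KFPHamiltonMap a - l • 1).mulVec v = 0) := by
    constructor <;> rintro ⟨v, hv, h⟩ <;> refine ⟨v, hv, ?_⟩
    · rw [Matrix.sub_mulVec, Matrix.smul_mulVec, Matrix.one_mulVec, h, sub_self]
    · rw [Matrix.sub_mulVec, Matrix.smul_mulVec, Matrix.one_mulVec, sub_eq_zero] at h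
      exact h
  rw [h1, Matrix.exists_mulVec_eq_zero_iff, KFP_det, div_eq_zero_iff]
  simp only [or_iff_left (by norm_num : (16:ℂ) ≠ 0)]

lemma roots_low (a : ℝ) (ha : a ≤ 1/4) (l : ℂ) :
    (16 * l ^ 4 + (4 - 8 * (a : ℂ)) * l ^ 2 + (a : ℂ) ^ 2 = 0) ↔
    (l = (((1 - Real.sqrt (1-4*a))/4 : ℝ) : ℂ) * I ∨
     l = (((Real.sqrt (1-4*a) - 1)/4 : ℝ) : ℂ) * I ∨
     l = (((1 + Real.sqrt (1-4*a))/4 : ℝ) : ℂ) * I ∨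
     l = ((-(1 + Real.sqrt (1-4*a))/4 : ℝ) : ℂ) * I) := by
  set s := Real.sqrt (1-4*a) with hs
  have hs2 : (s:ℂ)^2 = 1 - 4*(a:ℂ) := by
    have h : s^2 = 1 - 4*a := Real.sq_sqrt (by linarith)
    exact_mod_cast congrArg (Complex.ofReal) h
  have hI : (I:ℂ)^2 = -1 := Complex.I_sq
  have key : 16 * (16 * l ^ 4 + (4 - 8 * (a : ℂ)) * l ^ 2 + (a : ℂ) ^ 2) =
      (4*l - I*(1-(s:ℂ))) * (4*l + I*(1-(s:ℂ))) * (4*l - I*(1+(s:ℂ))) * (4*l + I*(1+(s:ℂ))) := by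
    linear_combination (1 - (s:ℂ)^2 + 4*(a:ℂ) - 32*l^2) * hs2 +
      (16*l^2*(2+2*(s:ℂ)^2) - (I^2-1)*(1-(s:ℂ)^2)^2) * hI
  constructor
  · intro h
    have h16 : (4*l - I*(1-(s:ℂ))) * (4*l + I*(1-(s:ℂ))) * (4*l - I*(1+(s:ℂ))) * (4*l + I*(1+(s:ℂ))) = 0 := by
      rw [← key, h]; ring
    rcases mul_eq_zero.mp h16 with h' | h4
    · rcases mul_eq_zero.mp h' with h'' | h3
      · rcases mul_eq_zero.mp h'' with h1 | h2
        · left; push_cast; linear_combination h1/4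
        · right; left; push_cast; linear_combination h2/4
      · right; right; left; push_cast; linear_combination h3/4
    · right; right; right; push_cast; linear_combination h4/4
  · rintro (rfl | rfl | rfl | rfl) <;>
    · apply mul_left_cancel₀ (show (16:ℂ) ≠ 0 by norm_num)
      rw [mul_zero, key]; push_cast; ring

lemma roots_high (a : ℝ) (ha : 1/4 < a) (l : ℂ) :
    (16 * l ^ 4 + (4 - 8 * (a : ℂ)) * l ^ 2 + (a : ℂ) ^ 2 = 0) ↔
    (l = ((Real.sqrt (4*a-1)/4 : ℝ) : ℂ) + ((1/4 : ℝ) : ℂ) * I ∨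
     l = ((Real.sqrt (4*a-1)/4 : ℝ) : ℂ) + ((-(1/4) : ℝ) : ℂ) * I ∨
     l = ((-(Real.sqrt (4*a-1))/4 : ℝ) : ℂ) + ((1/4 : ℝ) : ℂ) * I ∨
     l = ((-(Real.sqrt (4*a-1))/4 : ℝ) : ℂ) + ((-(1/4) : ℝ) : ℂ) * I) := by
  set r := Real.sqrt (4*a-1) with hr
  have hr2 : (r:ℂ)^2 = 4*(a:ℂ) - 1 := by
    have h : r^2 = 4*a - 1 := Real.sq_sqrt (by linarith)
    exact_mod_cast congrArg (Complex.ofReal) h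
  have hI : (I:ℂ)^2 = -1 := Complex.I_sq
  have key : 16 * (16 * l ^ 4 + (4 - 8 * (a : ℂ)) * l ^ 2 + (a : ℂ) ^ 2) =
      (4*l - ((r:ℂ) + I)) * (4*l - ((r:ℂ) - I)) * (4*l + ((r:ℂ) + I)) * (4*l + ((r:ℂ) - I)) := by
    linear_combination (32*l^2 - 8*(a:ℂ) - ((r:ℂ)^2 - (4*(a:ℂ)-1))) * hr2 +
      (2*(16*l^2 + (r:ℂ)^2 + 1) - (I^2+1)) * hI
  constructor
  · intro h
    have h16 : (4*l - ((r:ℂ) + I)) * (4*l - ((r:ℂ) - I)) * (4*l + ((r:ℂ) + I)) * (4*l + ((r:ℂ) - I)) = 0 := by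
      rw [← key, h]; ring
    rcases mul_eq_zero.mp h16 with h' | h4
    · rcases mul_eq_zero.mp h' with h'' | h3
      · rcases mul_eq_zero.mp h'' with h1 | h2
        · left; push_cast; linear_combination h1/4
        · right; left; push_cast; linear_combination h2/4
      · right; right; right; push_cast; linear_combination h3/4
    · right; right; left; push_cast; linear_combination h4/4
  · rintro (rfl | rfl | rfl | rfl) <;>
    · apply mul_left_cancel₀ (show (16:ℂ) ≠ 0 by norm_num)
      rw [mul_zero, key]; push_cast; ring

/-- The spectral gap `τ₀ = 2 min{Im λ : λ ∈ σ(F), Im λ > 0}` of the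
Kramers–Fokker–Planck Hamilton map equals `(√(1-4a) - 1)/2` for `a < 0`,
`(1 - √(1-4a))/2` for `0 < a ≤ 1/4`, and `1/2` for `a > 1/4`. -/
theorem KFP_spectral_gap (a : ℝ) (ha : a ≠ 0)
    (τ₀ : ℝ)
    (hτ₀ : τ₀ = 2 * sInf {t : ℝ | ∃ l : ℂ, (∃ v : Fin 4 → ℂ, v ≠ 0 ∧
        (KFPHamiltonMap a).mulVec v = l • v) ∧ 0 < l.im ∧ t = l.im}) :
    (a < 0 → τ₀ = (Real.sqrt (1 - 4 * a) - 1) / 2) ∧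
    (0 < a ∧ a ≤ 1 / 4 → τ₀ = (1 - Real.sqrt (1 - 4 * a)) / 2) ∧
    (1 / 4 < a → τ₀ = 1 / 2) := by
  have hS : {t : ℝ | ∃ l : ℂ, (∃ v : Fin 4 → ℂ, v ≠ 0 ∧
        (KFPHamiltonMap a).mulVec v = l • v) ∧ 0 < l.im ∧ t = l.im}
      = {t : ℝ | ∃ l : ℂ,
          (16 * l ^ 4 + (4 - 8 * (a : ℂ)) * l ^ 2 + (a : ℂ) ^ 2 = 0) ∧ 0 < l.im ∧ t = l.im} := by
    ext t
    simp only [Set.mem_setOf_eq, KFP_eig_iff]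
  rw [hS] at hτ₀
  refine ⟨?_, ?_, ?_⟩
  · -- a < 0
    intro haneg
    set s := Real.sqrt (1 - 4 * a) with hsdef
    have hs1 : 1 < s := by
      nlinarith [Real.sq_sqrt (show (0:ℝ) ≤ 1 - 4*a by linarith), Real.sqrt_nonneg (1 - 4*a)]
    have hset : {t : ℝ | ∃ l : ℂ,
          (16 * l ^ 4 + (4 - 8 * (a : ℂ)) * l ^ 2 + (a : ℂ) ^ 2 = 0) ∧ 0 < l.im ∧ t = l.im}
        = {(s - 1)/4, (1 + s)/4} := by
      ext t
      simp only [Set.mem_setOf_eq, Set.mem_insert_iff, Set.mem_singleton_iff]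
      constructor
      · rintro ⟨l, hp, him, rfl⟩
        rcases (roots_low a (by linarith) l).mp hp with rfl | rfl | rfl | rfl <;>
          simp only [Complex.mul_im, Complex.ofReal_re, Complex.ofReal_im, Complex.I_re,
            Complex.I_im, mul_one, mul_zero, add_zero, zero_mul] at him ⊢ <;>
          simp only [← hsdef] at him ⊢ <;>
          first | trivial | (exact absurd him (by linarith)) | tauto
      · rintro (rfl | rfl)
        · exact ⟨(((s - 1)/4 : ℝ) : ℂ) * I,
            (roots_low a (by linarith) _).mpr (Or.inr (Or.inl rfl)),
            by simp; linarith, by simp⟩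
        · exact ⟨(((1 + s)/4 : ℝ) : ℂ) * I,
            (roots_low a (by linarith) _).mpr (Or.inr (Or.inr (Or.inl rfl))),
            by simp; linarith, by simp⟩
    rw [hτ₀, hset, csInf_pair, inf_eq_left.mpr (by linarith : (s - 1)/4 ≤ (1 + s)/4)]
    ring
  · -- 0 < a ≤ 1/4
    rintro ⟨hapos, hale⟩
    set s := Real.sqrt (1 - 4 * a) with hsdef
    have hs0 : 0 ≤ s := Real.sqrt_nonneg _
    have hs1 : s < 1 := by
      nlinarith [Real.sq_sqrt (show (0:ℝ) ≤ 1 - 4*a by linarith), Real.sqrt_nonneg (1 - 4*a)]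
    have hset : {t : ℝ | ∃ l : ℂ,
          (16 * l ^ 4 + (4 - 8 * (a : ℂ)) * l ^ 2 + (a : ℂ) ^ 2 = 0) ∧ 0 < l.im ∧ t = l.im}
        = {(1 - s)/4, (1 + s)/4} := by
      ext t
      simp only [Set.mem_setOf_eq, Set.mem_insert_iff, Set.mem_singleton_iff]
      constructor
      · rintro ⟨l, hp, him, rfl⟩
        rcases (roots_low a (by linarith) l).mp hp with rfl | rfl | rfl | rfl <;>
          simp only [Complex.mul_im, Complex.ofReal_re, Complex.ofReal_im, Complex.I_re,
            Complex.I_im, mul_one, mul_zero, add_zero, zero_mul] at him ⊢ <;>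
          simp only [← hsdef] at him ⊢ <;>
          first | trivial | (exact absurd him (by linarith)) | tauto
      · rintro (rfl | rfl)
        · exact ⟨(((1 - s)/4 : ℝ) : ℂ) * I,
            (roots_low a (by linarith) _).mpr (Or.inl rfl),
            by simp; linarith, by simp⟩
        · exact ⟨(((1 + s)/4 : ℝ) : ℂ) * I,
            (roots_low a (by linarith) _).mpr (Or.inr (Or.inr (Or.inl rfl))),
            by simp; linarith, by simp⟩
    rw [hτ₀, hset, csInf_pair, inf_eq_left.mpr (by linarith : (1 - s)/4 ≤ (1 + s)/4)]
    ring
  · -- 1/4 < a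
    intro hagt
    set r := Real.sqrt (4 * a - 1) with hrdef
    have hset : {t : ℝ | ∃ l : ℂ,
          (16 * l ^ 4 + (4 - 8 * (a : ℂ)) * l ^ 2 + (a : ℂ) ^ 2 = 0) ∧ 0 < l.im ∧ t = l.im}
        = {(1:ℝ)/4} := by
      ext t
      simp only [Set.mem_setOf_eq, Set.mem_singleton_iff]
      constructor
      · rintro ⟨l, hp, him, rfl⟩
        rcases (roots_high a hagt l).mp hp with rfl | rfl | rfl | rfl <;>
          simp only [Complex.add_im, Complex.mul_im, Complex.ofReal_re, Complex.ofReal_im,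
            Complex.I_re, Complex.I_im, mul_one, mul_zero, add_zero, zero_mul, zero_add] at him ⊢ <;>
          first | trivial | (exact absurd him (by norm_num)) | rfl
      · rintro rfl
        exact ⟨((r/4 : ℝ) : ℂ) + ((1/4 : ℝ) : ℂ) * I,
          (roots_high a hagt _).mpr (Or.inl rfl),
          by simp, by simp⟩
    rw [hτ₀, hset, csInf_singleton]
    norm_num
end

section
/- For a < 0, the function u₀(x,v) = exp((a/4)√(1-4a) x² - a x v - (√(1-4a)/4) v²) is a Schwartz function and satisfies q^w u₀ = (√(1-4a)/2) u₀, where q^w = -∂_v² + v²/4 + v∂_x - a x ∂_v. -/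
open Real Nat

noncomputable section KFPaux

def fstL : (ℝ × ℝ) →L[ℝ] ℝ := ContinuousLinearMap.fst ℝ ℝ ℝ
def sndL : (ℝ × ℝ) →L[ℝ] ℝ := ContinuousLinearMap.snd ℝ ℝ ℝ

def qf (a s : ℝ) (p : ℝ × ℝ) : ℝ := (a / 4) * s * p.1 ^ 2 - a * p.1 * p.2 - (s / 4) * p.2 ^ 2

def Bf (a s : ℝ) : (ℝ × ℝ) →L[ℝ] ((ℝ × ℝ) →L[ℝ] ℝ) :=
  (((a * s / 2) • fstL + (-a) • sndL).smulRight fstL) +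
    (((-a) • fstL + (-(s / 2)) • sndL).smulRight sndL)

lemma Bf_apply (a s : ℝ) (p q : ℝ × ℝ) :
    Bf a s p q = (a * s / 2 * p.1 - a * p.2) * q.1 + (-(a * p.1) - s / 2 * p.2) * q.2 := by
  simp [Bf, fstL, sndL]; ring

lemma hasFDerivAt_qf (a s : ℝ) (p : ℝ × ℝ) : HasFDerivAt (qf a s) (Bf a s p) p := by
  have hx : HasFDerivAt (fun y : ℝ × ℝ => y.1) fstL p := hasFDerivAt_fst
  have hy : HasFDerivAt (fun y : ℝ × ℝ => y.2) sndL p := hasFDerivAt_snd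
  have h1 := (hx.mul hx).const_mul ((a / 4) * s)
  have h2 := (hx.mul hy).const_mul a
  have h3 := (hy.mul hy).const_mul (s / 4)
  have h := (h1.sub h2).sub h3
  have hfun : qf a s = fun y : ℝ × ℝ =>
      (a / 4) * s * (y.1 * y.1) - a * (y.1 * y.2) - s / 4 * (y.2 * y.2) := by
    funext y; simp [qf]; ring
  rw [hfun]
  refine h.congr_fderiv ?_
  refine ContinuousLinearMap.ext fun q => ?_
  simp [Bf_apply, fstL, sndL]; ring

lemma fderiv_qf (a s : ℝ) : fderiv ℝ (qf a s) = fun p => Bf a s p :=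
  funext fun p => (hasFDerivAt_qf a s p).fderiv

def Kc (a s : ℝ) : ℝ := (|a| * s / 2 + |a|) + (|a| + s / 2)

lemma Kc_nonneg (a s : ℝ) (hs : 0 ≤ s) : 0 ≤ Kc a s := by
  have := abs_nonneg a; unfold Kc; positivity

lemma norm_Bf_apply_le (a s : ℝ) (hs : 0 ≤ s) (p : ℝ × ℝ) :
    ‖Bf a s p‖ ≤ Kc a s * ‖p‖ := by
  refine ContinuousLinearMap.opNorm_le_bound _
    (mul_nonneg (Kc_nonneg a s hs) (norm_nonneg _)) fun q => ?_
  rw [Bf_apply]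
  have hp1 : |p.1| ≤ ‖p‖ := by rw [← Real.norm_eq_abs]; exact norm_fst_le p
  have hp2 : |p.2| ≤ ‖p‖ := by rw [← Real.norm_eq_abs]; exact norm_snd_le p
  have hq1 : |q.1| ≤ ‖q‖ := by rw [← Real.norm_eq_abs]; exact norm_fst_le q
  have hq2 : |q.2| ≤ ‖q‖ := by rw [← Real.norm_eq_abs]; exact norm_snd_le q
  have he1 : |a * s / 2 * p.1 - a * p.2| ≤ |a| * s / 2 * ‖p‖ + |a| * ‖p‖ := by
    refine (abs_sub _ _).trans ?_
    rw [abs_mul, abs_mul]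
    have habs : |a * s / 2| = |a| * s / 2 := by
      rw [abs_div, abs_mul, abs_of_nonneg hs]; norm_num
    rw [habs]
    have h1 : |a| * s / 2 * |p.1| ≤ |a| * s / 2 * ‖p‖ :=
      mul_le_mul_of_nonneg_left hp1 (by positivity)
    have h2 : |a| * |p.2| ≤ |a| * ‖p‖ := mul_le_mul_of_nonneg_left hp2 (abs_nonneg a)
    linarith
  have he2 : |(-(a * p.1) - s / 2 * p.2)| ≤ |a| * ‖p‖ + s / 2 * ‖p‖ := by
    refine (abs_sub _ _).trans ?_
    rw [abs_neg, abs_mul, abs_mul]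
    have habs : |s / 2| = s / 2 := abs_of_nonneg (by positivity)
    rw [habs]
    have h1 : |a| * |p.1| ≤ |a| * ‖p‖ := mul_le_mul_of_nonneg_left hp1 (abs_nonneg a)
    have h2 : s / 2 * |p.2| ≤ s / 2 * ‖p‖ := mul_le_mul_of_nonneg_left hp2 (by positivity)
    linarith
  have h0 : |((a * s / 2 * p.1 - a * p.2) * q.1 + (-(a * p.1) - s / 2 * p.2) * q.2)| ≤
      |a * s / 2 * p.1 - a * p.2| * |q.1| + |(-(a * p.1) - s / 2 * p.2)| * |q.2| := by
    refine (abs_add_le _ _).trans ?_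
    rw [abs_mul, abs_mul]
  have m1 : |a * s / 2 * p.1 - a * p.2| * |q.1| ≤ (|a| * s / 2 * ‖p‖ + |a| * ‖p‖) * ‖q‖ :=
    mul_le_mul he1 hq1 (abs_nonneg _) (by positivity)
  have m2 : |(-(a * p.1) - s / 2 * p.2)| * |q.2| ≤ (|a| * ‖p‖ + s / 2 * ‖p‖) * ‖q‖ :=
    mul_le_mul he2 hq2 (abs_nonneg _) (by positivity)
  rw [Real.norm_eq_abs]
  have hKc : Kc a s * ‖p‖ * ‖q‖ =
      (|a| * s / 2 * ‖p‖ + |a| * ‖p‖) * ‖q‖ + (|a| * ‖p‖ + s / 2 * ‖p‖) * ‖q‖ := by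
    unfold Kc; ring
  linarith [h0, m1, m2]

lemma norm_Bf_le (a s : ℝ) (hs : 0 ≤ s) : ‖Bf a s‖ ≤ Kc a s :=
  ContinuousLinearMap.opNorm_le_bound _ (Kc_nonneg a s hs) (norm_Bf_apply_le a s hs)

lemma contDiff_qf (a s : ℝ) : ContDiff ℝ ⊤ (qf a s) := by
  unfold qf; fun_prop

def Kc' (a s : ℝ) : ℝ := max (Kc a s) 1

lemma one_le_Kc' (a s : ℝ) : 1 ≤ Kc' a s := le_max_right _ _

lemma Kc_le_Kc' (a s : ℝ) : Kc a s ≤ Kc' a s := le_max_left _ _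

lemma iter_qf_bound (a s : ℝ) (hs : 0 ≤ s) (i : ℕ) (hi : 1 ≤ i) (x : ℝ × ℝ) :
    ‖iteratedFDeriv ℝ i (qf a s) x‖ ≤ (Kc' a s * (1 + ‖x‖)) ^ i := by
  have hK1 : (1:ℝ) ≤ Kc' a s := one_le_Kc' a s
  have hK0 : (0:ℝ) ≤ Kc' a s := le_trans zero_le_one hK1
  have hx0 : (0:ℝ) ≤ ‖x‖ := norm_nonneg x
  have hD1 : (1:ℝ) ≤ Kc' a s * (1 + ‖x‖) := by nlinarith
  match i, hi with
  | 1, _ =>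
    rw [show (1:ℕ) = 0 + 1 from rfl, ← norm_iteratedFDeriv_fderiv, norm_iteratedFDeriv_zero,
      fderiv_qf]
    calc ‖Bf a s x‖ ≤ Kc a s * ‖x‖ := norm_Bf_apply_le a s hs x
    _ ≤ (Kc' a s * (1 + ‖x‖)) ^ (0 + 1) := by
        rw [pow_one]
        nlinarith [Kc_le_Kc' a s, Kc_nonneg a s hs]
  | 2, _ =>
    rw [show (2:ℕ) = 0 + 1 + 1 from rfl, ← norm_iteratedFDeriv_fderiv, fderiv_qf,
      show (fun p => Bf a s p) = ⇑(Bf a s) from rfl,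
      ← norm_iteratedFDeriv_fderiv, norm_iteratedFDeriv_zero, (Bf a s).fderiv]
    calc ‖Bf a s‖ ≤ Kc a s := norm_Bf_le a s hs
    _ ≤ (Kc' a s * (1 + ‖x‖)) ^ (0 + 1 + 1) := by
        have hpow : (Kc' a s * (1 + ‖x‖)) ^ (0 + 1 + 1) =
            (Kc' a s * (1 + ‖x‖)) * (Kc' a s * (1 + ‖x‖)) := by ring
        rw [hpow]
        nlinarith [Kc_le_Kc' a s, Kc_nonneg a s hs]
  | (m+3), _ =>
    rw [show m + 3 = m + 1 + 1 + 1 from rfl, ← norm_iteratedFDeriv_fderiv, fderiv_qf,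
      show (fun p => Bf a s p) = ⇑(Bf a s) from rfl, ← norm_iteratedFDeriv_fderiv]
    have h1 : fderiv ℝ (⇑(Bf a s)) = fun _ : ℝ × ℝ => Bf a s := by
      funext p; exact (Bf a s).fderiv
    rw [h1, iteratedFDeriv_const_of_ne (Nat.succ_ne_zero m)]
    simp only [Pi.zero_apply, norm_zero]
    positivity

lemma gauss_iter_bound (a s : ℝ) (hs : 0 ≤ s) (n : ℕ) (x : ℝ × ℝ) :
    ‖iteratedFDeriv ℝ n (fun p => Real.exp (qf a s p)) x‖ ≤
      n ! * Real.exp (qf a s x) * (Kc' a s * (1 + ‖x‖)) ^ n := by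
  have hcomp : (fun p => Real.exp (qf a s p)) = Real.exp ∘ qf a s := rfl
  rw [hcomp]
  refine norm_iteratedFDeriv_comp_le (g := Real.exp) (f := qf a s) (N := (⊤ : ℕ∞))
    Real.contDiff_exp ((contDiff_qf a s).of_le le_top) (by exact_mod_cast le_top) x
    (C := Real.exp (qf a s x)) (D := Kc' a s * (1 + ‖x‖)) ?_ ?_
  · intro i _
    have h : iteratedDeriv i Real.exp = Real.exp := by
      rw [iteratedDeriv_eq_iterate, Real.iter_deriv_exp]
    rw [norm_iteratedFDeriv_eq_norm_iteratedDeriv, h, Real.norm_eq_abs,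
      abs_of_pos (Real.exp_pos _)]
  · intro i hi1 _
    exact iter_qf_bound a s hs i hi1 x

lemma poly_gauss (m : ℕ) (δ : ℝ) (hδ : 0 < δ) (r : ℝ) (hr : 0 ≤ r) :
    (1 + r) ^ m * Real.exp (-(δ * r ^ 2)) ≤ 2 ^ m * (1 + m ! / δ ^ m) := by
  set t := δ * r ^ 2 with ht
  have ht0 : 0 ≤ t := by positivity
  have hIpos : (0:ℝ) < Real.exp (-t) := Real.exp_pos _
  have hfac : (0:ℝ) < (m ! : ℝ) := by exact_mod_cast Nat.factorial_pos m
  have htm : t ^ m / (m ! : ℝ) ≤ Real.exp t := by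
    have hsum := Real.sum_le_exp_of_nonneg ht0 (m + 1)
    refine le_trans ?_ hsum
    have hone : t ^ m / (m ! : ℝ) =
        ∑ i ∈ Finset.range (m+1), if i = m then t ^ i / (i ! : ℝ) else 0 := by simp
    rw [hone]
    refine Finset.sum_le_sum fun i _ => ?_
    split_ifs with h
    · exact le_rfl
    · positivity
  have ht' : t ^ m = δ ^ m * r ^ (2 * m) := by
    rw [ht, mul_pow, ← pow_mul, mul_comm 2 m]
  have step : δ ^ m * r ^ (2 * m) ≤ (m ! : ℝ) * Real.exp t := by
    rw [div_le_iff₀ hfac] at htm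
    rw [← ht']
    linarith [htm]
  have h2 : r ^ (2 * m) * Real.exp (-t) ≤ (m ! : ℝ) / δ ^ m := by
    rw [le_div_iff₀ (pow_pos hδ m)]
    calc r ^ (2 * m) * Real.exp (-t) * δ ^ m
        = (δ ^ m * r ^ (2 * m)) * Real.exp (-t) := by ring
    _ ≤ ((m ! : ℝ) * Real.exp t) * Real.exp (-t) :=
        mul_le_mul_of_nonneg_right step hIpos.le
    _ = (m ! : ℝ) := by rw [mul_assoc, ← Real.exp_add]; simp
  have h3 : Real.exp (-t) ≤ 1 := Real.exp_le_one_iff.mpr (by linarith)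
  have h1 : (1 + r) ^ m ≤ 2 ^ m * (1 + r ^ (2 * m)) := by
    have h2m0 : (0:ℝ) ≤ r ^ (2 * m) := by positivity
    have hp2 : (0:ℝ) < 2 ^ m := by positivity
    rcases le_total r 1 with h | h
    · have hle : (1 + r) ^ m ≤ 2 ^ m := pow_le_pow_left₀ (by linarith) (by linarith) m
      nlinarith
    · have hrm : r ^ m ≤ r ^ (2 * m) := pow_le_pow_right₀ h (by omega)
      have hle : (1 + r) ^ m ≤ (2 * r) ^ m := pow_le_pow_left₀ (by linarith) (by linarith) m
      rw [mul_pow] at hle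
      have hrm0 : (0:ℝ) ≤ r ^ m := by positivity
      nlinarith
  have hp2 : (0:ℝ) < 2 ^ m := by positivity
  calc (1 + r) ^ m * Real.exp (-t)
      ≤ (2 ^ m * (1 + r ^ (2 * m))) * Real.exp (-t) :=
        mul_le_mul_of_nonneg_right h1 hIpos.le
  _ = 2 ^ m * (Real.exp (-t) + r ^ (2 * m) * Real.exp (-t)) := by ring
  _ ≤ 2 ^ m * (1 + (m ! : ℝ) / δ ^ m) := by nlinarith

lemma qf_neg_bound (a s : ℝ) (ha : a < 0) (hs2 : s ^ 2 = 1 - 4 * a) (hs1 : 1 ≤ s) (p : ℝ × ℝ) :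
    qf a s p ≤ -((-a) / (4 * s * (1 - a))) * ‖p‖ ^ 2 := by
  have hs0 : (0:ℝ) < s := lt_of_lt_of_le one_pos hs1
  have h1a : (0:ℝ) < 1 - a := by linarith
  have hden : (0:ℝ) < 4 * s * (1 - a) := by positivity
  have hδ : (0:ℝ) < (-a) / (4 * s * (1 - a)) := div_pos (by linarith) hden
  have hnorm : ‖p‖ ^ 2 ≤ p.1 ^ 2 + p.2 ^ 2 := by
    have h := Prod.norm_def p
    rw [Real.norm_eq_abs, Real.norm_eq_abs] at h
    rcases le_total |p.1| |p.2| with hle | hle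
    · rw [h, max_eq_right hle]
      nlinarith [sq_abs p.1, sq_abs p.2, sq_nonneg p.1]
    · rw [h, max_eq_left hle]
      nlinarith [sq_abs p.1, sq_abs p.2, sq_nonneg p.2]
  have hγ : (0:ℝ) < (1 - 2*a) ^ 2 := by nlinarith
  have hid : (1 - 2*a) ^ 2 * (-(4 * s * (1 - a) * qf a s p) + a * (p.1 ^ 2 + p.2 ^ 2)) =
      ((1 - 2*a) ^ 2 * p.2 + 2 * a * s * (1 - a) * p.1) ^ 2 + (a * p.1) ^ 2 := by
    simp only [qf]
    linear_combination ((1 - 2*a)^2 * (1-a) * (-(a * p.1^2) + p.2^2)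
      - 4 * a^2 * (1-a)^2 * p.1^2) * hs2
  have hkey : 4 * s * (1 - a) * qf a s p ≤ a * (p.1 ^ 2 + p.2 ^ 2) := by
    nlinarith [sq_nonneg ((1 - 2*a) ^ 2 * p.2 + 2 * a * s * (1 - a) * p.1), sq_nonneg (a * p.1)]
  have h1 : qf a s p ≤ a * (p.1 ^ 2 + p.2 ^ 2) / (4 * s * (1 - a)) := by
    rw [le_div_iff₀ hden]; linarith [hkey]
  have h2 : a * (p.1 ^ 2 + p.2 ^ 2) / (4 * s * (1 - a)) =
      -((-a) / (4 * s * (1 - a))) * (p.1 ^ 2 + p.2 ^ 2) := by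
    field_simp
  have h3 : -((-a) / (4 * s * (1 - a))) * (p.1 ^ 2 + p.2 ^ 2) ≤
      -((-a) / (4 * s * (1 - a))) * ‖p‖ ^ 2 := by
    have := mul_le_mul_of_nonneg_left hnorm hδ.le
    nlinarith
  linarith [h1, h2.le, h2.ge, h3]

lemma schwartz_decay (a s : ℝ) (ha : a < 0) (hs2 : s ^ 2 = 1 - 4 * a) (hs1 : 1 ≤ s)
    (k n : ℕ) :
    ∃ C : ℝ, ∀ x : ℝ × ℝ,
      ‖x‖ ^ k * ‖iteratedFDeriv ℝ n (fun p => Real.exp (qf a s p)) x‖ ≤ C := by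
  have hs0 : (0:ℝ) < s := lt_of_lt_of_le one_pos hs1
  have h1a : (0:ℝ) < 1 - a := by linarith
  set δ := (-a) / (4 * s * (1 - a)) with hδdef
  have hδ : (0:ℝ) < δ := div_pos (by linarith) (by positivity)
  have hK1 : (1:ℝ) ≤ Kc' a s := one_le_Kc' a s
  have hK0 : (0:ℝ) ≤ Kc' a s := le_trans zero_le_one hK1
  refine ⟨(n ! : ℝ) * Kc' a s ^ n * (2 ^ (k + n) * (1 + ((k + n)! : ℝ) / δ ^ (k + n))),
    fun x => ?_⟩
  have hx0 : (0:ℝ) ≤ ‖x‖ := norm_nonneg x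
  have hb := gauss_iter_bound a s hs0.le n x
  have hE : Real.exp (qf a s x) ≤ Real.exp (-(δ * ‖x‖ ^ 2)) := by
    apply Real.exp_le_exp.mpr
    have := qf_neg_bound a s ha hs2 hs1 x
    nlinarith
  have step1 : ‖x‖ ^ k * ‖iteratedFDeriv ℝ n (fun p => Real.exp (qf a s p)) x‖ ≤
      ‖x‖ ^ k * ((n ! : ℝ) * Real.exp (qf a s x) * (Kc' a s * (1 + ‖x‖)) ^ n) :=
    mul_le_mul_of_nonneg_left hb (by positivity)
  have hfn : (0:ℝ) < (n ! : ℝ) := by exact_mod_cast Nat.factorial_pos n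
  have step2 : ‖x‖ ^ k * ((n ! : ℝ) * Real.exp (qf a s x) * (Kc' a s * (1 + ‖x‖)) ^ n) ≤
      ((n ! : ℝ) * Kc' a s ^ n) * ((1 + ‖x‖) ^ (k + n) * Real.exp (-(δ * ‖x‖ ^ 2))) := by
    have e2 : ‖x‖ ^ k * (1 + ‖x‖) ^ n ≤ (1 + ‖x‖) ^ (k + n) := by
      rw [pow_add]
      exact mul_le_mul_of_nonneg_right
        (pow_le_pow_left₀ hx0 (by linarith) k) (by positivity)
    have hrw : ‖x‖ ^ k * ((n ! : ℝ) * Real.exp (qf a s x) * (Kc' a s * (1 + ‖x‖)) ^ n) =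
        ((n ! : ℝ) * Kc' a s ^ n) * ((‖x‖ ^ k * (1 + ‖x‖) ^ n) * Real.exp (qf a s x)) := by
      rw [mul_pow]; ring
    rw [hrw]
    apply mul_le_mul_of_nonneg_left _ (by positivity)
    have hEpos : (0:ℝ) < Real.exp (qf a s x) := Real.exp_pos _
    calc (‖x‖ ^ k * (1 + ‖x‖) ^ n) * Real.exp (qf a s x)
        ≤ (1 + ‖x‖) ^ (k + n) * Real.exp (qf a s x) :=
          mul_le_mul_of_nonneg_right e2 hEpos.le
    _ ≤ (1 + ‖x‖) ^ (k + n) * Real.exp (-(δ * ‖x‖ ^ 2)) :=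
          mul_le_mul_of_nonneg_left hE (by positivity)
  have step3 : ((n ! : ℝ) * Kc' a s ^ n) * ((1 + ‖x‖) ^ (k + n) * Real.exp (-(δ * ‖x‖ ^ 2))) ≤
      ((n ! : ℝ) * Kc' a s ^ n) * (2 ^ (k + n) * (1 + ((k + n)! : ℝ) / δ ^ (k + n))) := by
    apply mul_le_mul_of_nonneg_left (poly_gauss (k + n) δ hδ ‖x‖ hx0) (by positivity)
  calc ‖x‖ ^ k * ‖iteratedFDeriv ℝ n (fun p => Real.exp (qf a s p)) x‖
      ≤ _ := step1
  _ ≤ _ := step2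
  _ ≤ _ := step3
  _ = (n ! : ℝ) * Kc' a s ^ n * (2 ^ (k + n) * (1 + ((k + n)! : ℝ) / δ ^ (k + n))) := by ring


/-- For `a < 0`, the function
`u₀(x,v) = exp((a/4)√(1-4a) x² - a x v - (√(1-4a)/4) v²)` is a Schwartz function and
satisfies `q^w u₀ = (√(1-4a)/2) u₀`, where `q^w = -∂_v² + v²/4 + v ∂_x - a x ∂_v`. -/
theorem KFP_ground_state_neg_a (a : ℝ) (ha : a < 0)
    (u₀ : ℝ → ℝ → ℝ)
    (hu₀ : ∀ x v, u₀ x v = Real.exp ((a / 4) * Real.sqrt (1 - 4 * a) * x^2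
        - a * x * v - (Real.sqrt (1 - 4 * a) / 4) * v^2)) :
    (∃ f : SchwartzMap (ℝ × ℝ) ℝ, ∀ x v, f (x, v) = u₀ x v) ∧
    ∀ x v : ℝ,
      -(deriv (deriv (fun w => u₀ x w)) v)
        + (v^2 / 4) * u₀ x v
        + v * deriv (fun s => u₀ s v) x
        - a * x * deriv (fun w => u₀ x w) v
      = (Real.sqrt (1 - 4 * a) / 2) * u₀ x v := by
  set s : ℝ := Real.sqrt (1 - 4 * a) with hsdef
  have h14 : (0:ℝ) ≤ 1 - 4 * a := by linarith
  have hs2 : s ^ 2 = 1 - 4 * a := Real.sq_sqrt h14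
  have hs1 : (1:ℝ) ≤ s := by
    have h0 : (0:ℝ) ≤ s := Real.sqrt_nonneg _
    nlinarith
  have hs0 : (0:ℝ) < s := lt_of_lt_of_le one_pos hs1
  constructor
  · -- Schwartz part
    refine ⟨⟨fun p => Real.exp (qf a s p),
      Real.contDiff_exp.comp (contDiff_qf a s) |>.of_le le_top,
      fun k n => schwartz_decay a s ha hs2 hs1 k n⟩, fun x v => ?_⟩
    show Real.exp (qf a s (x, v)) = u₀ x v
    rw [hu₀]
    rfl
  · -- PDE part
    intro x v
    -- canonical exponent as a function of the second variable
    have hxfun : (fun w => u₀ x w) =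
        fun w => Real.exp ((a / 4) * s * x ^ 2 - a * x * w - s / 4 * w ^ 2) := by
      funext w
      exact hu₀ x w
    have hPd : ∀ w : ℝ, HasDerivAt
        (fun w => (a / 4) * s * x ^ 2 - a * x * w - s / 4 * w ^ 2)
        (-(a * x) - s / 4 * (2 * w)) w := by
      intro w
      have h1 : HasDerivAt (fun w : ℝ => a * x * w) (a * x) w := by
        simpa using (hasDerivAt_id w).const_mul (a * x)
      have h2 : HasDerivAt (fun w : ℝ => s / 4 * w ^ 2) (s / 4 * (2 * w)) w := by
        have := (hasDerivAt_pow 2 w).const_mul (s / 4)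
        simpa using this
      exact (h1.const_sub ((a / 4) * s * x ^ 2)).sub h2
    have hexp : ∀ w : ℝ, HasDerivAt
        (fun w => Real.exp ((a / 4) * s * x ^ 2 - a * x * w - s / 4 * w ^ 2))
        (Real.exp ((a / 4) * s * x ^ 2 - a * x * w - s / 4 * w ^ 2) *
          (-(a * x) - s / 4 * (2 * w))) w := fun w => (hPd w).exp
    have hd1 : deriv (fun w => u₀ x w) =
        fun w => Real.exp ((a / 4) * s * x ^ 2 - a * x * w - s / 4 * w ^ 2) *
          (-(a * x) - s / 4 * (2 * w)) := by
      rw [hxfun]; funext w; exact (hexp w).deriv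
    -- second derivative in v
    have hg : HasDerivAt (fun w : ℝ => -(a * x) - s / 4 * (2 * w)) (-(s / 4 * 2)) v := by
      have hbase : HasDerivAt (fun w : ℝ => -(a * x) - s / 4 * 2 * w) (-(s / 4 * 2)) v := by
        simpa using ((hasDerivAt_id v).const_mul (s / 4 * 2)).const_sub (-(a * x))
      have hfg : (fun w : ℝ => -(a * x) - s / 4 * 2 * w) =
          (fun w : ℝ => -(a * x) - s / 4 * (2 * w)) := by funext w; ring
      rw [hfg] at hbase
      exact hbase
    have hprod := (hexp v).mul hg
    have hd2 : deriv (deriv (fun w => u₀ x w)) v =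
        Real.exp ((a / 4) * s * x ^ 2 - a * x * v - s / 4 * v ^ 2) *
          (-(a * x) - s / 4 * (2 * v)) * (-(a * x) - s / 4 * (2 * v)) +
        Real.exp ((a / 4) * s * x ^ 2 - a * x * v - s / 4 * v ^ 2) * (-(s / 4 * 2)) := by
      rw [hd1]
      exact hprod.deriv
    -- derivative in x
    have hyfun : (fun t => u₀ t v) =
        fun t => Real.exp ((a / 4) * s * t ^ 2 - a * v * t - s / 4 * v ^ 2) := by
      funext t
      rw [hu₀]
      congr 1
      ring
    have hPdx : HasDerivAt (fun t => (a / 4) * s * t ^ 2 - a * v * t - s / 4 * v ^ 2)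
        ((a / 4) * s * (2 * x) - a * v) x := by
      have h1 : HasDerivAt (fun t : ℝ => (a / 4) * s * t ^ 2) ((a / 4) * s * (2 * x)) x := by
        have := (hasDerivAt_pow 2 x).const_mul ((a / 4) * s)
        simpa using this
      have h2 : HasDerivAt (fun t : ℝ => a * v * t) (a * v) x := by
        simpa using (hasDerivAt_id x).const_mul (a * v)
      simpa using (h1.sub h2).sub_const (s / 4 * v ^ 2)
    have hdx : deriv (fun t => u₀ t v) x =
        Real.exp ((a / 4) * s * x ^ 2 - a * v * x - s / 4 * v ^ 2) *
          ((a / 4) * s * (2 * x) - a * v) := by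
      rw [hyfun]
      exact hPdx.exp.deriv
    have hEE : Real.exp ((a / 4) * s * x ^ 2 - a * v * x - s / 4 * v ^ 2) =
        Real.exp ((a / 4) * s * x ^ 2 - a * x * v - s / 4 * v ^ 2) := by
      congr 1
      ring
    have hu : u₀ x v = Real.exp ((a / 4) * s * x ^ 2 - a * x * v - s / 4 * v ^ 2) :=
      hu₀ x v
    rw [hd2, hd1, hdx, hEE, hu]
    set E := Real.exp ((a / 4) * s * x ^ 2 - a * x * v - s / 4 * v ^ 2) with hE
    linear_combination (-(v ^ 2) / 4 * E) * hs2

end KFPaux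
end

section
/- If a complex-valued quadratic form a = Re a + i b on R^n (n ≥ 1) satisfies λ₁ e^{-a(x)} + λ₂ e^{-conj(a)(x)} = 0 for all x ∈ R^n with (λ₁, λ₂) ≠ (0,0), then the imaginary part b of a is identically zero and λ₁ = -λ₂. -/
open Complex

/-- If a complex-valued quadratic form `q` on `ℝⁿ` (`n ≥ 1`) satisfies
`λ₁ e^{-q(x)} + λ₂ e^{-conj(q)(x)} = 0` for all `x` with `(λ₁, λ₂) ≠ (0,0)`, then the
imaginary part of `q` is identically zero and `λ₁ = -λ₂`. -/
theorem linear_dependence_of_gaussians (n : ℕ) (hn : 1 ≤ n)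
    (q : (Fin n → ℝ) → ℂ)
    (B : (Fin n → ℝ) → (Fin n → ℝ) → ℂ)
    (hB₁ : ∀ x, IsLinearMap ℝ (fun y => B x y))
    (hB₂ : ∀ y, IsLinearMap ℝ (fun x => B x y))
    (hBsymm : ∀ x y, B x y = B y x)
    (hq : ∀ x, q x = B x x)
    (l₁ l₂ : ℂ) (hl : ¬(l₁ = 0 ∧ l₂ = 0))
    (hdep : ∀ x, l₁ * Complex.exp (-q x) + l₂ * Complex.exp (-(starRingEnd ℂ) (q x)) = 0) :
    (∀ x, (q x).im = 0) ∧ l₁ = -l₂ := by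
  have hπ : (0:ℝ) < Real.pi := Real.pi_pos
  have hq0 : q 0 = 0 := by
    rw [hq]
    simpa using (hB₂ 0).map_zero
  have h0 := hdep 0
  rw [hq0] at h0
  simp [Complex.exp_zero] at h0
  -- h0 : l₁ + l₂ = 0 (hopefully)
  have hl12 : l₁ = -l₂ := by linear_combination h0
  have hl1 : l₁ ≠ 0 := by
    intro h
    apply hl
    constructor
    · exact h
    · have : l₂ = -l₁ := by linear_combination h0
      rw [this, h, neg_zero]
  have key : ∀ y, ∃ k : ℤ, (q y).im = k * Real.pi := by
    intro y
    have h := hdep y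
    have h2 : l₁ * Complex.exp (-q y) = l₁ * Complex.exp (-(starRingEnd ℂ) (q y)) := by
      rw [hl12] at h ⊢
      linear_combination h
    have hexp : Complex.exp (-q y) = Complex.exp (-(starRingEnd ℂ) (q y)) :=
      mul_left_cancel₀ hl1 h2
    rw [Complex.exp_eq_exp_iff_exists_int] at hexp
    obtain ⟨k, hk⟩ := hexp
    refine ⟨-k, ?_⟩
    have him := congrArg Complex.im hk
    simp [Complex.conj_im, Complex.mul_im, Complex.mul_re] at him
    push_cast
    linarith
  have him0 : ∀ x, (q x).im = 0 := by
    intro x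
    by_contra hc
    set c := (q x).im with hcdef
    have habs : 0 < |c| := abs_pos.mpr hc
    set t := Real.sqrt (Real.pi / (2 * |c|)) with ht
    have ht2 : t ^ 2 = Real.pi / (2 * |c|) := Real.sq_sqrt (by positivity)
    have hqs : (q (t • x)).im = t ^ 2 * c := by
      have h1 : B (t • x) (t • x) = t • (t • B x x) := by
        rw [(hB₂ (t • x)).map_smul, (hB₁ x).map_smul]
      rw [hq, h1, hcdef, hq]
      simp [Complex.smul_im]
      ring
    obtain ⟨k, hk⟩ := key (t • x)
    rw [hqs, ht2] at hk
    -- hk : π / (2 * |c|) * c = k * π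
    have hc2 : c = 2 * |c| * k := by
      have h3 : Real.pi * c = (k : ℝ) * Real.pi * (2 * |c|) := by
        field_simp at hk
        linear_combination Real.pi * hk
      have := mul_left_cancel₀ (ne_of_gt hπ) (by linarith [h3] : Real.pi * c = Real.pi * (2 * |c| * k))
      exact this
    rcases le_or_gt 0 c with h | h
    · have hab : |c| = c := abs_of_nonneg h
      rw [hab] at hc2
      have hcne : c ≠ 0 := hc
      have : (2 * (k:ℝ)) = 1 := by
        have := mul_left_cancel₀ hcne (by linarith : c * (2 * (k:ℝ)) = c * 1)
        exact this
      have : (2 * k : ℤ) = 1 := by exact_mod_cast this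
      omega
    · have hab : |c| = -c := abs_of_neg h
      rw [hab] at hc2
      have hcne : c ≠ 0 := hc
      have : (2 * (k:ℝ)) = -1 := by
        have := mul_left_cancel₀ hcne (by linarith : c * (2 * (k:ℝ)) = c * (-1))
        exact this
      have : (2 * k : ℤ) = -1 := by exact_mod_cast this
      omega
  exact ⟨him0, hl12⟩
end

section
/- The Gaussian u₀(x,y,z) = exp(-(β/4)(ω²x² + y² + |z|²)) satisfies H̃ u₀ = μ₀ u₀ with μ₀ = (1/2)Σ_{j=1}^m αⱼ, where H̃ = y∂_x - ω²x∂_y + (Σλⱼzⱼ)∂_y - yΣλⱼ∂_{zⱼ} + Σαⱼ(-β⁻¹∂_{zⱼ}² + (β/4)zⱼ²). -/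
lemma gauss_hasDeriv (c b a : ℝ) (s : ℝ) :
    HasDerivAt (fun t => Real.exp (c * (a + b * t ^ 2)))
      (Real.exp (c * (a + b * s ^ 2)) * (c * (b * (2 * s ^ 1)))) s :=
  ((((hasDerivAt_pow 2 s).const_mul b).const_add a).const_mul c).exp

lemma gauss_deriv (c b a : ℝ) (s : ℝ) :
    deriv (fun t => Real.exp (c * (a + b * t ^ 2))) s
      = 2 * c * b * s * Real.exp (c * (a + b * s ^ 2)) := by
  rw [(gauss_hasDeriv c b a s).deriv]; ring

lemma gauss_deriv2 (c a : ℝ) (s : ℝ) :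
    deriv (deriv (fun t => Real.exp (c * (a + 1 * t ^ 2)))) s
      = (2 * c + 4 * c ^ 2 * s ^ 2) * Real.exp (c * (a + 1 * s ^ 2)) := by
  have h1 : deriv (fun t => Real.exp (c * (a + 1 * t ^ 2)))
      = fun t => (2 * c * t) * Real.exp (c * (a + 1 * t ^ 2)) := by
    funext t
    rw [gauss_deriv c 1 a t]; ring
  rw [h1]
  have h2 : HasDerivAt (fun t : ℝ => (2 * c * t) * Real.exp (c * (a + 1 * t ^ 2)))
      ((2 * c * 1) * Real.exp (c * (a + 1 * s ^ 2))
        + (2 * c * s) * (Real.exp (c * (a + 1 * s ^ 2)) * (c * (1 * (2 * s ^ 1))))) s := by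
    have := ((hasDerivAt_id s).const_mul (2 * c)).mul (gauss_hasDeriv c 1 a s)
    simpa [Pi.mul_def] using this
  rw [h2.deriv]; ring

/-- The Gaussian `u₀(x,y,z) = exp(-(β/4)(ω²x² + y² + |z|²))` satisfies
`H̃ u₀ = μ₀ u₀` with `μ₀ = (1/2)Σⱼ αⱼ`, where
`H̃ = y∂ₓ - ω²x∂_y + (Σλⱼzⱼ)∂_y - yΣλⱼ∂_{zⱼ} + Σαⱼ(-β⁻¹∂_{zⱼ}² + (β/4)zⱼ²)`. -/
theorem GLE_gaussian_ground_state (m : ℕ) (α lam : Fin m → ℝ) (ω β : ℝ)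
    (hω : ω ≠ 0) (hβ : 0 < β) (hα : ∀ j, 0 < α j)
    (u₀ : ℝ → ℝ → (Fin m → ℝ) → ℝ)
    (hu₀ : ∀ x y z, u₀ x y z =
      Real.exp (-(β / 4) * (ω ^ 2 * x ^ 2 + y ^ 2 + ∑ j, (z j) ^ 2))) :
    ∀ (x y : ℝ) (z : Fin m → ℝ),
      y * deriv (fun s => u₀ s y z) x
        - ω ^ 2 * x * deriv (fun t => u₀ x t z) y
        + (∑ j, lam j * z j) * deriv (fun t => u₀ x t z) y
        - y * ∑ j, lam j * deriv (fun t => u₀ x y (Function.update z j t)) (z j)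
        + ∑ j, α j *
            (-(β⁻¹ * deriv (deriv (fun t => u₀ x y (Function.update z j t))) (z j))
              + (β / 4) * (z j) ^ 2 * u₀ x y z)
      = ((1 / 2) * ∑ j, α j) * u₀ x y z := by
  intro x y z
  set c : ℝ := -(β / 4) with hc
  set Z : ℝ := ∑ j, (z j) ^ 2 with hZ
  set E : ℝ := Real.exp (c * (ω ^ 2 * x ^ 2 + y ^ 2 + Z)) with hE
  have hu : u₀ x y z = E := by rw [hu₀]
  -- x derivative
  have hx : deriv (fun s => u₀ s y z) x = 2 * c * ω ^ 2 * x * E := by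
    have : (fun s => u₀ s y z)
        = fun s => Real.exp (c * ((y ^ 2 + Z) + ω ^ 2 * s ^ 2)) := by
      funext s; rw [hu₀]; congr 1; ring
    rw [this, gauss_deriv]
    rw [hE]; ring_nf
  -- y derivative
  have hy : deriv (fun t => u₀ x t z) y = 2 * c * y * E := by
    have : (fun t => u₀ x t z)
        = fun t => Real.exp (c * ((ω ^ 2 * x ^ 2 + Z) + 1 * t ^ 2)) := by
      funext t; rw [hu₀]; congr 1; ring
    rw [this, gauss_deriv]
    rw [hE]; ring_nf
  -- z functions
  have hzfun : ∀ j : Fin m, (fun t => u₀ x y (Function.update z j t))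
      = fun t => Real.exp (c * ((ω ^ 2 * x ^ 2 + y ^ 2
          + ∑ k ∈ Finset.univ.erase j, (z k) ^ 2) + 1 * t ^ 2)) := by
    intro j
    funext t
    rw [hu₀]
    congr 1
    have : ∀ k, (Function.update z j t k) ^ 2
        = Function.update (fun k => (z k) ^ 2) j (t ^ 2) k := fun k =>
      Function.apply_update (fun _ v => v ^ 2) z j t k
    simp_rw [this]
    rw [Finset.sum_update_of_mem (Finset.mem_univ j), Finset.erase_eq]
    ring
  have hZsplit : ∀ j : Fin m,
      Z = (z j) ^ 2 + ∑ k ∈ Finset.univ.erase j, (z k) ^ 2 := by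
    intro j
    rw [hZ, ← Finset.add_sum_erase _ _ (Finset.mem_univ j)]
  have hzd : ∀ j : Fin m,
      deriv (fun t => u₀ x y (Function.update z j t)) (z j) = 2 * c * z j * E := by
    intro j
    rw [hzfun j, gauss_deriv]
    rw [hE, hZsplit j]; ring_nf
  have hzd2 : ∀ j : Fin m,
      deriv (deriv (fun t => u₀ x y (Function.update z j t))) (z j)
        = (2 * c + 4 * c ^ 2 * (z j) ^ 2) * E := by
    intro j
    rw [hzfun j, gauss_deriv2]
    rw [hE, hZsplit j]; ring_nf
  rw [hx, hy, hu]
  have hsum1 : (∑ j, lam j * deriv (fun t => u₀ x y (Function.update z j t)) (z j))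
      = (∑ j, lam j * z j) * (2 * c * E) := by
    rw [Finset.sum_mul]
    refine Finset.sum_congr rfl fun j _ => ?_
    rw [hzd j]; ring
  rw [hsum1]
  have hsum2 : (∑ j, α j *
        (-(β⁻¹ * deriv (deriv (fun t => u₀ x y (Function.update z j t))) (z j))
          + (β / 4) * (z j) ^ 2 * E))
      = ((1 / 2) * ∑ j, α j) * E := by
    rw [Finset.mul_sum, Finset.sum_mul]
    refine Finset.sum_congr rfl fun j _ => ?_
    rw [hzd2 j, hc]
    field_simp
    ring
  rw [hsum2]
  ring
end
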